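/- Let (X_i : i ∈ I) and (Y_i : i ∈ I) be families of Borel-valued random variables over a countable index set I, and let S be a random variable. Assume (S, X_i) has the same distribution as (S, Y_i) for each i ∈ I, and that given S, both families (X_i : i ∈ I) and (Y_i : i ∈ I) are conditionally independent families. Then (S, (X_i : i ∈ I)) and (S, (Y_i : i ∈ I)) have the same joint distribution. -/

import Mathlib

open ProbabilityTheory MeasureTheory Set

section Boxes

variable {I : Type*} {β : I → Type*} [mβ' : ∀ i, MeasurableSpace (β i)]

/-- Finite boxes in a product space. -/
def boxes (β : I → Type*) [∀ i, MeasurableSpace (β i)] : Set (Set (∀ i, β i)) :=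
  {s | ∃ (t : Finset I) (B : ∀ i, Set (β i)),
    (∀ i, MeasurableSet (B i)) ∧ s = (↑t : Set I).pi B}

lemma univ_mem_boxes : (univ : Set (∀ i, β i)) ∈ boxes β :=
  ⟨∅, fun _ => univ, fun _ => MeasurableSet.univ, by simp⟩

lemma isCountablySpanning_boxes : IsCountablySpanning (boxes β) :=
  ⟨fun _ => univ, fun _ => univ_mem_boxes, iUnion_const _⟩

lemma isPiSystem_boxes : IsPiSystem (boxes β) := by
  classical
  rintro _ ⟨t₁, B₁, hB₁, rfl⟩ _ ⟨t₂, B₂, hB₂, rfl⟩ -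
  refine ⟨t₁ ∪ t₂, fun i => (if i ∈ t₁ then B₁ i else univ) ∩ (if i ∈ t₂ then B₂ i else univ),
    fun i => ?_, ?_⟩
  · refine MeasurableSet.inter ?_ ?_ <;> split_ifs <;>
      first | exact hB₁ i | exact hB₂ i | exact MeasurableSet.univ
  · ext f
    simp only [mem_inter_iff, mem_pi, Finset.coe_union, Set.mem_union, Finset.mem_coe,
      mem_ite_univ_right]
    constructor
    · rintro ⟨h₁, h₂⟩ i _
      exact ⟨fun hi => h₁ i hi, fun hi => h₂ i hi⟩
    · intro h
      exact ⟨fun i hi => (h i (Or.inl hi)).1 hi, fun i hi => (h i (Or.inr hi)).2 hi⟩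

lemma generateFrom_boxes : MeasurableSpace.generateFrom (boxes β) = MeasurableSpace.pi := by
  classical
  refine le_antisymm (MeasurableSpace.generateFrom_le ?_) ?_
  · rintro _ ⟨t, B, hB, rfl⟩
    exact MeasurableSet.pi t.countable_toSet fun i _ => hB i
  · rw [MeasurableSpace.pi_eq_generateFrom_projections]
    refine MeasurableSpace.generateFrom_le ?_
    rintro _ ⟨i, A, hA, rfl⟩
    refine MeasurableSpace.measurableSet_generateFrom
      ⟨{i}, Function.update (fun j => (univ : Set (β j))) i A, ?_, ?_⟩
    · intro j
      rcases eq_or_ne j i with rfl | hj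
      · simpa using hA
      · simp [Function.update_of_ne hj]
    · ext f
      simp [Set.mem_pi]

end Boxes

lemma setIntegral_indicator_one {Ω : Type*} {mΩ : MeasurableSpace Ω} (μ : Measure Ω)
    {u s : Set Ω} (hu : MeasurableSet u) :
    ∫ x in s, u.indicator (fun _ => (1 : ℝ)) x ∂μ = (μ (u ∩ s)).toReal := by
  rw [integral_indicator hu, setIntegral_const, measureReal_def, Measure.restrict_apply hu, smul_eq_mul, mul_one]

/-- If `(S, X i) =ᵈ (S, Y i)` for all `i` in a countable index set, and both families
`(X i)` and `(Y i)` are conditionally independent given `S`, then the joint laws of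
`(S, (X i : i))` and `(S, (Y i : i))` coincide. -/
theorem stmt2 {Ω I : Type*} [Countable I] {mΩ : MeasurableSpace Ω} [StandardBorelSpace Ω]
    (μ : Measure Ω) [IsProbabilityMeasure μ]
    {γ : Type*} {mγ : MeasurableSpace γ} [StandardBorelSpace γ]
    {β : I → Type*} {mβ : ∀ i, MeasurableSpace (β i)} [∀ i, StandardBorelSpace (β i)]
    (S : Ω → γ) (X Y : ∀ i, Ω → β i)
    (hS : Measurable S) (hX : ∀ i, Measurable (X i)) (hY : ∀ i, Measurable (Y i))
    (hdist : ∀ i, μ.map (fun ω => (S ω, X i ω)) = μ.map (fun ω => (S ω, Y i ω)))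
    (hXci : iCondIndepFun (MeasurableSpace.comap S mγ) hS.comap_le (m := mβ) X μ)
    (hYci : iCondIndepFun (MeasurableSpace.comap S mγ) hS.comap_le (m := mβ) Y μ) :
    μ.map (fun ω => (S ω, fun i => X i ω)) = μ.map (fun ω => (S ω, fun i => Y i ω)) := by
  have hm' : MeasurableSpace.comap S mγ ≤ mΩ := hS.comap_le
  -- key computation on rectangles
  have key : ∀ (t : Finset I) (B : ∀ i, Set (β i)), (∀ i, MeasurableSet (B i)) →
      ∀ (A : Set γ), MeasurableSet A →
      μ (S ⁻¹' A ∩ ⋂ i ∈ t, X i ⁻¹' B i) = μ (S ⁻¹' A ∩ ⋂ i ∈ t, Y i ⁻¹' B i) := by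
    intro t B hB A hA
    have hXB : ∀ i, MeasurableSet (X i ⁻¹' B i) := fun i => (hX i) (hB i)
    have hYB : ∀ i, MeasurableSet (Y i ⁻¹' B i) := fun i => (hY i) (hB i)
    have hXint : ∀ i, Integrable ((X i ⁻¹' B i).indicator (fun _ => (1 : ℝ))) μ :=
      fun i => (integrable_const 1).indicator (hXB i)
    -- pairwise equality of measures on rectangles
    have hpair : ∀ (i : I) (A' : Set γ), MeasurableSet A' →
        μ (X i ⁻¹' B i ∩ S ⁻¹' A') = μ (Y i ⁻¹' B i ∩ S ⁻¹' A') := by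
      intro i A' hA'
      have h1 : μ.map (fun ω => (S ω, X i ω)) (A' ×ˢ B i)
          = μ (S ⁻¹' A' ∩ X i ⁻¹' B i) := by
        rw [Measure.map_apply (hS.prodMk (hX i)) (hA'.prod (hB i)), Set.mk_preimage_prod]
      have h2 : μ.map (fun ω => (S ω, Y i ω)) (A' ×ˢ B i)
          = μ (S ⁻¹' A' ∩ Y i ⁻¹' B i) := by
        rw [Measure.map_apply (hS.prodMk (hY i)) (hA'.prod (hB i)), Set.mk_preimage_prod]
      rw [Set.inter_comm, Set.inter_comm (Y i ⁻¹' B i), ← h1, ← h2, hdist i]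
    -- conditional expectations agree
    have gcond : ∀ i, (μ⟦Y i ⁻¹' B i | MeasurableSpace.comap S mγ⟧)
        =ᵐ[μ] (μ⟦X i ⁻¹' B i | MeasurableSpace.comap S mγ⟧) := by
      intro i
      refine ae_eq_condExp_of_forall_setIntegral_eq hm' (hXint i)
        (fun s _ _ => integrable_condExp.integrableOn) (fun s hs hμs => ?_)
        (StronglyMeasurable.aestronglyMeasurable stronglyMeasurable_condExp)
      obtain ⟨A', hA', rfl⟩ := hs
      have hYint : Integrable ((Y i ⁻¹' B i).indicator (fun _ => (1 : ℝ))) μ :=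
        (integrable_const 1).indicator (hYB i)
      rw [setIntegral_condExp hm' hYint ⟨A', hA', rfl⟩,
        setIntegral_indicator_one μ (hYB i), setIntegral_indicator_one μ (hXB i),
        hpair i A' hA']
    -- conditional independence factorizations
    have prodX : (μ⟦⋂ i ∈ t, X i ⁻¹' B i | MeasurableSpace.comap S mγ⟧)
        =ᵐ[μ] fun ω => ∏ i ∈ t, (μ⟦X i ⁻¹' B i | MeasurableSpace.comap S mγ⟧) ω := by
      have := (iCondIndepFun_iff (MeasurableSpace.comap S mγ) hm' mβ X hX μ).mp hXci t
        (g := fun i => X i ⁻¹' B i) (fun i _ => ⟨B i, hB i, rfl⟩)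
      filter_upwards [this] with ω hω using by simpa using hω
    have prodY : (μ⟦⋂ i ∈ t, Y i ⁻¹' B i | MeasurableSpace.comap S mγ⟧)
        =ᵐ[μ] fun ω => ∏ i ∈ t, (μ⟦Y i ⁻¹' B i | MeasurableSpace.comap S mγ⟧) ω := by
      have := (iCondIndepFun_iff (MeasurableSpace.comap S mγ) hm' mβ Y hY μ).mp hYci t
        (g := fun i => Y i ⁻¹' B i) (fun i _ => ⟨B i, hB i, rfl⟩)
      filter_upwards [this] with ω hω using by simpa using hω
    have hprod_eq : (fun ω => ∏ i ∈ t, (μ⟦X i ⁻¹' B i | MeasurableSpace.comap S mγ⟧) ω)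
        =ᵐ[μ] fun ω => ∏ i ∈ t, (μ⟦Y i ⁻¹' B i | MeasurableSpace.comap S mγ⟧) ω := by
      have h : ∀ᵐ ω ∂μ, ∀ i ∈ t, (μ⟦Y i ⁻¹' B i | MeasurableSpace.comap S mγ⟧) ω
          = (μ⟦X i ⁻¹' B i | MeasurableSpace.comap S mγ⟧) ω :=
        (Filter.eventually_all_finset t).mpr fun i _ => gcond i
      filter_upwards [h] with ω hω
      exact (Finset.prod_congr rfl fun i hi => (hω i hi)).symm
    -- measurable intersections
    have hXcap : MeasurableSet (⋂ i ∈ t, X i ⁻¹' B i) :=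
      MeasurableSet.biInter t.countable_toSet fun i _ => hXB i
    have hYcap : MeasurableSet (⋂ i ∈ t, Y i ⁻¹' B i) :=
      MeasurableSet.biInter t.countable_toSet fun i _ => hYB i
    have hXcapInt : Integrable ((⋂ i ∈ t, X i ⁻¹' B i).indicator (fun _ => (1 : ℝ))) μ :=
      (integrable_const 1).indicator hXcap
    have hYcapInt : Integrable ((⋂ i ∈ t, Y i ⁻¹' B i).indicator (fun _ => (1 : ℝ))) μ :=
      (integrable_const 1).indicator hYcap
    have hsA : MeasurableSet[MeasurableSpace.comap S mγ] (S ⁻¹' A) := ⟨A, hA, rfl⟩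
    have hreal : (μ ((⋂ i ∈ t, X i ⁻¹' B i) ∩ S ⁻¹' A)).toReal
        = (μ ((⋂ i ∈ t, Y i ⁻¹' B i) ∩ S ⁻¹' A)).toReal := by
      rw [← setIntegral_indicator_one μ hXcap, ← setIntegral_indicator_one μ hYcap,
        ← setIntegral_condExp hm' hXcapInt hsA, ← setIntegral_condExp hm' hYcapInt hsA]
      refine integral_congr_ae (ae_restrict_of_ae ?_)
      filter_upwards [prodX, prodY, hprod_eq] with ω h1 h2 h3
      rw [h1, h3, ← h2]
    rw [Set.inter_comm (S ⁻¹' A), Set.inter_comm (S ⁻¹' A)]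
    exact (ENNReal.toReal_eq_toReal_iff' (measure_ne_top μ _) (measure_ne_top μ _)).mp hreal
  -- now extend to the whole product σ-algebra
  have hfX : Measurable (fun ω => (S ω, fun i => X i ω)) :=
    hS.prodMk (measurable_pi_lambda _ fun i => hX i)
  have hfY : Measurable (fun ω => (S ω, fun i => Y i ω)) :=
    hS.prodMk (measurable_pi_lambda _ fun i => hY i)
  have hpX : IsProbabilityMeasure (μ.map (fun ω => (S ω, fun i => X i ω))) :=
    Measure.isProbabilityMeasure_map hfX.aemeasurable
  have hpY : IsProbabilityMeasure (μ.map (fun ω => (S ω, fun i => Y i ω))) :=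
    Measure.isProbabilityMeasure_map hfY.aemeasurable
  refine ext_of_generate_finite
    (image2 (· ×ˢ ·) {A : Set γ | MeasurableSet A} (boxes β))
    (generateFrom_eq_prod MeasurableSpace.generateFrom_measurableSet
      generateFrom_boxes isCountablySpanning_measurableSet isCountablySpanning_boxes).symm
    (MeasurableSpace.isPiSystem_measurableSet.prod isPiSystem_boxes) ?_
    (by simp [measure_univ])
  rintro _ ⟨A, hA, _, ⟨t, B, hB, rfl⟩, rfl⟩
  have hbox : MeasurableSet ((↑t : Set I).pi B) :=
    MeasurableSet.pi t.countable_toSet fun i _ => hB i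
  rw [Measure.map_apply hfX (hA.prod hbox), Measure.map_apply hfY (hA.prod hbox)]
  have hXpre : (fun ω => (S ω, fun i => X i ω)) ⁻¹' (A ×ˢ (↑t : Set I).pi B)
      = S ⁻¹' A ∩ ⋂ i ∈ t, X i ⁻¹' B i := by
    ext ω; simp [Set.mem_pi]
  have hYpre : (fun ω => (S ω, fun i => Y i ω)) ⁻¹' (A ×ˢ (↑t : Set I).pi B)
      = S ⁻¹' A ∩ ⋂ i ∈ t, Y i ⁻¹' B i := by
    ext ω; simp [Set.mem_pi]
  rw [hXpre, hYpre]
  exact key t B hB A hA
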